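/- Let X be a real random variable with finite variance, t > 0, and Y = X + √t·Z with Z ~ N(0,1) independent of X. Then the Fisher information of Y satisfies J(Y) = ( E[(E[X|Y])²] + E[Y²] − 2·E[X·Y] ) / t². -/

import Mathlib

open MeasureTheory ProbabilityTheory Real

/-- The density of `X + √t·Z` (Gaussian smoothing of the law `μ` of `X` at time `t`):
`f_t(y) = ∫ (2πt)^{-1/2} · exp(-(y-x)²/(2t)) dμ(x)`. -/
noncomputable def heatDensity (μ : Measure ℝ) (t : ℝ) (y : ℝ) : ℝ :=
  ∫ x, (Real.sqrt (2 * Real.pi * t))⁻¹ * Real.exp (-(y - x) ^ 2 / (2 * t)) ∂μ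

noncomputable def gk (t x y : ℝ) : ℝ :=
  (Real.sqrt (2 * Real.pi * t))⁻¹ * Real.exp (-(y - x) ^ 2 / (2 * t))

lemma heatDensity_eq (μ : Measure ℝ) (t y : ℝ) :
    heatDensity μ t y = ∫ x, gk t x y ∂μ := rfl

lemma gk_eq_gaussianPDFReal {t : ℝ} (ht : 0 < t) (x y : ℝ) :
    gk t x y = gaussianPDFReal x ⟨t, ht.le⟩ y := by
  simp [gk, gaussianPDFReal, NNReal.coe_mk]
  rfl

lemma gk_pos {t : ℝ} (ht : 0 < t) (x y : ℝ) : 0 < gk t x y := by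
  apply mul_pos _ (Real.exp_pos _)
  rw [inv_pos]
  apply Real.sqrt_pos.2
  positivity

lemma gk_le {t : ℝ} (ht : 0 < t) (x y : ℝ) :
    gk t x y ≤ (Real.sqrt (2 * Real.pi * t))⁻¹ := by
  have h1 : Real.exp (-(y - x) ^ 2 / (2 * t)) ≤ 1 := by
    apply Real.exp_le_one_iff.2
    apply div_nonpos_of_nonpos_of_nonneg (neg_nonpos.2 (sq_nonneg _)) (by positivity)
  calc gk t x y ≤ (Real.sqrt (2 * Real.pi * t))⁻¹ * 1 := by
        apply mul_le_mul_of_nonneg_left h1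
        positivity
    _ = _ := mul_one _

lemma gk_measurable (t : ℝ) : Measurable (fun p : ℝ × ℝ => gk t p.1 p.2) := by
  unfold gk
  apply Measurable.mul measurable_const
  apply Real.measurable_exp.comp
  apply Measurable.div_const
  apply Measurable.neg
  exact (measurable_snd.sub measurable_fst).pow_const 2

lemma gk_measurable_x (t y : ℝ) : Measurable (fun x => gk t x y) := by
  unfold gk
  apply Measurable.mul measurable_const
  apply Real.measurable_exp.comp
  apply Measurable.div_const
  apply Measurable.neg
  exact ((measurable_const.sub measurable_id).pow_const 2)

lemma gk_measurable_y (t x : ℝ) : Measurable (fun y => gk t x y) := by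
  unfold gk
  apply Measurable.mul measurable_const
  apply Real.measurable_exp.comp
  apply Measurable.div_const
  apply Measurable.neg
  exact ((measurable_id.sub measurable_const).pow_const 2)

lemma integrable_gk_x (μ : Measure ℝ) [IsProbabilityMeasure μ] {t : ℝ} (ht : 0 < t) (y : ℝ) :
    Integrable (fun x => gk t x y) μ := by
  apply Integrable.mono' (integrable_const ((Real.sqrt (2 * Real.pi * t))⁻¹))
    (gk_measurable_x t y).aestronglyMeasurable
  filter_upwards with x
  rw [Real.norm_eq_abs, abs_of_pos (gk_pos ht x y)]
  exact gk_le ht x y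

lemma integrable_gk_y {t : ℝ} (ht : 0 < t) (x : ℝ) :
    Integrable (fun y => gk t x y) volume := by
  simp_rw [gk_eq_gaussianPDFReal ht]
  exact integrable_gaussianPDFReal x ⟨t, ht.le⟩

lemma integral_gk_y {t : ℝ} (ht : 0 < t) (x : ℝ) :
    ∫ y, gk t x y = 1 := by
  simp_rw [gk_eq_gaussianPDFReal ht]
  exact integral_gaussianPDFReal_eq_one x (by simp [ht.ne'] : (⟨t, ht.le⟩ : NNReal) ≠ 0)

lemma heatDensity_pos (μ : Measure ℝ) [IsProbabilityMeasure μ] {t : ℝ} (ht : 0 < t) (y : ℝ) :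
    0 < heatDensity μ t y := by
  rw [heatDensity_eq]
  rw [integral_pos_iff_support_of_nonneg_ae
    (ae_of_all _ fun x => (gk_pos ht x y).le) (integrable_gk_x μ ht y)]
  have : (Function.support fun x => gk t x y) = Set.univ := by
    ext x; simp [Function.mem_support, (gk_pos ht x y).ne']
  rw [this]
  simp
noncomputable def hg (μ : Measure ℝ) (t y : ℝ) : ℝ := ∫ x, x * gk t x y ∂μ
noncomputable def hh (μ : Measure ℝ) (t y : ℝ) : ℝ := ∫ x, x ^ 2 * gk t x y ∂μ
noncomputable def hr (μ : Measure ℝ) (t y : ℝ) : ℝ := hg μ t y / heatDensity μ t y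

lemma integrable_id' (μ : Measure ℝ) [IsProbabilityMeasure μ]
    (hμ2 : Integrable (fun x => x ^ 2) μ) : Integrable (fun x : ℝ => x) μ := by
  apply Integrable.mono' (g := fun x => 1 + x ^ 2) ((integrable_const 1).add hμ2)
    measurable_id.aestronglyMeasurable
  filter_upwards with x
  simp only [id_eq, Real.norm_eq_abs]
  nlinarith [sq_nonneg (|x| - 1), sq_abs x]

lemma integrable_mul_gk_x (μ : Measure ℝ) [IsProbabilityMeasure μ]
    (hμ2 : Integrable (fun x => x ^ 2) μ) {t : ℝ} (ht : 0 < t) (y : ℝ) :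
    Integrable (fun x => x * gk t x y) μ := by
  apply Integrable.mono' (g := fun x => |x| * (Real.sqrt (2 * Real.pi * t))⁻¹)
    (((integrable_id' μ hμ2).abs).mul_const _)
    (measurable_id.mul (gk_measurable_x t y)).aestronglyMeasurable
  filter_upwards with x
  simp only [id_eq, Real.norm_eq_abs, Pi.mul_apply]
  rw [abs_mul, abs_of_pos (gk_pos ht x y)]
  exact mul_le_mul_of_nonneg_left (gk_le ht x y) (abs_nonneg x)

lemma integrable_sq_mul_gk_x (μ : Measure ℝ) [IsProbabilityMeasure μ]
    (hμ2 : Integrable (fun x => x ^ 2) μ) {t : ℝ} (ht : 0 < t) (y : ℝ) :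
    Integrable (fun x => x ^ 2 * gk t x y) μ := by
  apply Integrable.mono' (g := fun x => x ^ 2 * (Real.sqrt (2 * Real.pi * t))⁻¹)
    (hμ2.mul_const _)
    ((measurable_id.pow_const 2).mul (gk_measurable_x t y)).aestronglyMeasurable
  filter_upwards with x
  simp only [id_eq, Real.norm_eq_abs, Pi.mul_apply]
  rw [abs_mul, abs_of_pos (gk_pos ht x y), abs_of_nonneg (sq_nonneg x)]
  exact mul_le_mul_of_nonneg_left (gk_le ht x y) (sq_nonneg x)

lemma abs_mul_exp_le {t : ℝ} (ht : 0 < t) (u : ℝ) :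
    |u| * Real.exp (-u ^ 2 / (2 * t)) ≤ Real.sqrt (2 * t) := by
  have hexp1 : Real.exp (-u ^ 2 / (2 * t)) ≤ 1 := by
    apply Real.exp_le_one_iff.2
    apply div_nonpos_of_nonpos_of_nonneg (neg_nonpos.2 (sq_nonneg _)) (by positivity)
  rcases le_or_gt (|u|) (Real.sqrt (2 * t)) with h | h
  · have := mul_le_mul_of_nonneg_left hexp1 (abs_nonneg u)
    rw [mul_one] at this
    exact this.trans h
  · have hu : 0 < |u| := lt_of_le_of_lt (Real.sqrt_nonneg _) h
    have hu0 : u ≠ 0 := abs_pos.1 hu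
    have hv : 0 < u ^ 2 / (2 * t) := by positivity
    have hexp : Real.exp (-u ^ 2 / (2 * t)) ≤ (u ^ 2 / (2 * t))⁻¹ := by
      rw [neg_div, Real.exp_neg]
      exact inv_anti₀ hv (by linarith [Real.add_one_le_exp (u ^ 2 / (2 * t))])
    have h1 : |u| * Real.exp (-u ^ 2 / (2 * t)) ≤ |u| * (u ^ 2 / (2 * t))⁻¹ :=
      mul_le_mul_of_nonneg_left hexp (abs_nonneg u)
    have h2 : |u| * (u ^ 2 / (2 * t))⁻¹ = 2 * t / |u| := by
      rw [← sq_abs u]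
      field_simp
    have h3 : 2 * t / |u| ≤ 2 * t / Real.sqrt (2 * t) :=
      div_le_div_of_nonneg_left (by positivity) (Real.sqrt_pos.2 (by positivity)) h.le
    rw [Real.div_sqrt] at h3
    linarith

lemma hasDerivAt_gk {t : ℝ} (ht : 0 < t) (x y : ℝ) :
    HasDerivAt (fun y' => gk t x y') (gk t x y * ((x - y) / t)) y := by
  have hu : HasDerivAt (fun y' : ℝ => -(y' - x) ^ 2 / (2 * t))
      (-(2 * (y - x) ^ 1 * 1) / (2 * t)) y := by
    exact ((((hasDerivAt_id y).sub_const x).pow 2).neg).div_const (2 * t)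
  have := (hu.exp).const_mul (Real.sqrt (2 * Real.pi * t))⁻¹
  refine this.congr_deriv ?_
  unfold gk
  field_simp
  ring

lemma hasDerivAt_heatDensity (μ : Measure ℝ) [IsProbabilityMeasure μ]
    (hμ2 : Integrable (fun x => x ^ 2) μ) {t : ℝ} (ht : 0 < t) (y : ℝ) :
    HasDerivAt (heatDensity μ t) ((hg μ t y - y * heatDensity μ t y) / t) y := by
  have key := hasDerivAt_integral_of_dominated_loc_of_deriv_le (μ := μ)
      (F := fun y' x => gk t x y') (F' := fun y' x => gk t x y' * ((x - y') / t))
      (x₀ := y) (bound := fun _ => (Real.sqrt (2 * Real.pi * t))⁻¹ * Real.sqrt (2 * t) / t)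
      (Metric.ball_mem_nhds y one_pos) ?_ (integrable_gk_x μ ht y) ?_ ?_ (integrable_const _) ?_
  · have h2 : (∫ x, gk t x y * ((x - y) / t) ∂μ) = (hg μ t y - y * heatDensity μ t y) / t := by
      have : ∀ x : ℝ, gk t x y * ((x - y) / t) = (x * gk t x y - y * gk t x y) / t := by
        intro x; ring
      simp_rw [this, integral_div]
      rw [integral_sub (integrable_mul_gk_x μ hμ2 ht y)
        ((integrable_gk_x μ ht y).const_mul y), integral_const_mul]
      simp only [hg, heatDensity_eq]
    have h3 : HasDerivAt (fun n => ∫ a, gk t a n ∂μ)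
        ((hg μ t y - y * heatDensity μ t y) / t) y := h2 ▸ key.2
    exact h3
  · filter_upwards with y'
    exact (gk_measurable_x t y').aestronglyMeasurable
  · exact ((gk_measurable_x t y).mul
      ((measurable_id.sub measurable_const).div_const t)).aestronglyMeasurable
  · filter_upwards with x y' _
    rw [Real.norm_eq_abs, abs_mul, abs_of_pos (gk_pos ht x y'), abs_div,
      abs_of_pos ht]
    unfold gk
    rw [mul_assoc, mul_div_assoc]
    apply mul_le_mul_of_nonneg_left _ (by positivity)
    rw [← mul_div_assoc]
    apply (div_le_div_iff_of_pos_right ht).2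
    rw [abs_sub_comm, mul_comm]
    exact abs_mul_exp_le ht _
  · filter_upwards with x y' _
    exact hasDerivAt_gk ht x y'
lemma gk_shift {t : ℝ} (x w : ℝ) : gk t x (w + x) = gk t 0 w := by
  unfold gk; simp

lemma integrable_sq_mul_exp_neg_mul_sq {b : ℝ} (hb : 0 < b) :
    Integrable (fun w : ℝ => w ^ 2 * Real.exp (-b * w ^ 2)) volume := by
  have hb2 : 0 < b / 2 := by linarith
  apply Integrable.mono' ((integrable_exp_neg_mul_sq hb2).const_mul (2 * (2 / b)))
    ((measurable_id.pow_const 2).mul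
      ((measurable_id.pow_const 2).const_mul (-b)).exp).aestronglyMeasurable
  filter_upwards with w
  simp only [id_eq, Real.norm_eq_abs, Pi.mul_apply, abs_mul]
  rw [abs_of_nonneg (sq_nonneg w), abs_of_pos (Real.exp_pos _)]
  have key : |w| * Real.exp (-w ^ 2 / (2 * (2 / b))) ≤ Real.sqrt (2 * (2 / b)) :=
    abs_mul_exp_le (by positivity) w
  have h1 : w ^ 2 * Real.exp (-(b / 2) * w ^ 2) ≤ 2 * (2 / b) := by
    have := mul_le_mul key key (by positivity) (Real.sqrt_nonneg _)
    rw [Real.mul_self_sqrt (by positivity)] at this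
    have hE : Real.exp (-w ^ 2 / (2 * (2 / b))) * Real.exp (-w ^ 2 / (2 * (2 / b)))
        = Real.exp (-(b / 2) * w ^ 2) := by
      rw [← Real.exp_add]
      congr 1
      field_simp
      ring
    calc w ^ 2 * Real.exp (-(b / 2) * w ^ 2)
        = (|w| * Real.exp (-w ^ 2 / (2 * (2 / b)))) * (|w| * Real.exp (-w ^ 2 / (2 * (2 / b)))) := by
          rw [mul_mul_mul_comm, abs_mul_abs_self, hE]
          ring
      _ ≤ 2 * (2 / b) := this
  calc w ^ 2 * Real.exp (-b * w ^ 2)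
      = (w ^ 2 * Real.exp (-(b / 2) * w ^ 2)) * Real.exp (-(b / 2) * w ^ 2) := by
        rw [mul_assoc, ← Real.exp_add]; ring_nf
    _ ≤ 2 * (2 / b) * Real.exp (-(b / 2) * w ^ 2) :=
        mul_le_mul_of_nonneg_right h1 (Real.exp_pos _).le

lemma gk_exp_form {t : ℝ} (x y : ℝ) :
    gk t x y = (Real.sqrt (2 * Real.pi * t))⁻¹ * Real.exp (-(1 / (2 * t)) * (y - x) ^ 2) := by
  unfold gk
  congr 1
  congr 1
  ring

lemma integrable_mul_gk_y {t : ℝ} (ht : 0 < t) (x : ℝ) :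
    Integrable (fun y => y * gk t x y) volume := by
  have hb : 0 < 1 / (2 * t) := by positivity
  have h1 : Integrable (fun w : ℝ =>
      (Real.sqrt (2 * Real.pi * t))⁻¹ * (w * Real.exp (-(1 / (2 * t)) * w ^ 2))) volume :=
    (integrable_mul_exp_neg_mul_sq hb).const_mul _
  have h2 : Integrable (fun w : ℝ =>
      (x * (Real.sqrt (2 * Real.pi * t))⁻¹) * Real.exp (-(1 / (2 * t)) * w ^ 2)) volume :=
    (integrable_exp_neg_mul_sq hb).const_mul _
  have key : Integrable (fun w : ℝ => (w + x) * gk t 0 w) volume := by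
    apply (h1.add h2).congr (ae_of_all _ fun w => ?_)
    simp only [Pi.add_apply]
    rw [gk_exp_form]
    simp only [sub_zero]
    ring
  have := key.comp_sub_right x
  apply this.congr (ae_of_all _ fun y => ?_)
  show (y - x + x) * gk t 0 (y - x) = y * gk t x y
  have h4 : y - x + x = y := by ring
  rw [h4, ← gk_shift x (y - x), h4]

lemma integrable_sq_mul_gk_y {t : ℝ} (ht : 0 < t) (x : ℝ) :
    Integrable (fun y => y ^ 2 * gk t x y) volume := by
  have hb : 0 < 1 / (2 * t) := by positivity
  have h1 : Integrable (fun w : ℝ =>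
      (Real.sqrt (2 * Real.pi * t))⁻¹ * (w ^ 2 * Real.exp (-(1 / (2 * t)) * w ^ 2))) volume :=
    (integrable_sq_mul_exp_neg_mul_sq hb).const_mul _
  have h2 : Integrable (fun w : ℝ =>
      (2 * x * (Real.sqrt (2 * Real.pi * t))⁻¹) * (w * Real.exp (-(1 / (2 * t)) * w ^ 2))) volume :=
    ((integrable_mul_exp_neg_mul_sq hb).const_mul _)
  have h3 : Integrable (fun w : ℝ =>
      (x ^ 2 * (Real.sqrt (2 * Real.pi * t))⁻¹) * Real.exp (-(1 / (2 * t)) * w ^ 2)) volume :=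
    (integrable_exp_neg_mul_sq hb).const_mul _
  have key : Integrable (fun w : ℝ => (w + x) ^ 2 * gk t 0 w) volume := by
    apply ((h1.add h2).add h3).congr (ae_of_all _ fun w => ?_)
    simp only [Pi.add_apply]
    rw [gk_exp_form]
    simp only [sub_zero]
    ring
  have := key.comp_sub_right x
  apply this.congr (ae_of_all _ fun y => ?_)
  show (y - x + x) ^ 2 * gk t 0 (y - x) = y ^ 2 * gk t x y
  have h4 : y - x + x = y := by ring
  rw [h4, ← gk_shift x (y - x), h4]

lemma integrable_abs_mul_gk_y {t : ℝ} (ht : 0 < t) (x : ℝ) :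
    Integrable (fun y => |y| * gk t x y) volume := by
  apply (integrable_mul_gk_y ht x).abs.congr (ae_of_all _ fun y => ?_)
  show |y * gk t x y| = |y| * gk t x y
  rw [abs_mul, abs_of_pos (gk_pos ht x y)]

lemma integral_abs_mul_gk_y_le {t : ℝ} (ht : 0 < t) (x : ℝ) :
    ∫ y, |y| * gk t x y ≤ |x| + ∫ w, |w| * gk t 0 w := by
  have htrans : ∫ y, |y| * gk t x y = ∫ w, |w + x| * gk t 0 w := by
    rw [← integral_add_right_eq_self (fun y => |y| * gk t x y) x]
    congr 1 with w
    show |w + x| * gk t x (w + x) = |w + x| * gk t 0 w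
    rw [gk_shift]
  rw [htrans]
  have h1 : Integrable (fun w => |w + x| * gk t 0 w) volume := by
    apply ((integrable_abs_mul_gk_y ht x).comp_add_right x).congr (ae_of_all _ fun w => ?_)
    show |w + x| * gk t x (w + x) = |w + x| * gk t 0 w
    rw [gk_shift]
  have h2 : Integrable (fun w => |x| * gk t 0 w + |w| * gk t 0 w) volume :=
    (((integrable_gk_y ht 0).const_mul _)).add (integrable_abs_mul_gk_y ht 0)
  have := integral_mono h1 h2 (fun w => ?_)
  · rw [integral_add ((integrable_gk_y ht 0).const_mul _) (integrable_abs_mul_gk_y ht 0),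
      integral_const_mul, integral_gk_y ht 0, mul_one] at this
    linarith
  · have : |w + x| ≤ |x| + |w| := by
      calc |w + x| ≤ |w| + |x| := abs_add_le w x
        _ = |x| + |w| := by ring
    have hgk := (gk_pos ht 0 w).le
    nlinarith

lemma heatDensity_measurable (μ : Measure ℝ) [SFinite μ] (t : ℝ) :
    Measurable (heatDensity μ t) := by
  have h : StronglyMeasurable fun p : ℝ × ℝ => gk t p.2 p.1 :=
    ((gk_measurable t).comp measurable_swap).stronglyMeasurable
  exact h.integral_prod_right'.measurable

lemma hg_measurable (μ : Measure ℝ) [SFinite μ] (t : ℝ) :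
    Measurable (hg μ t) := by
  have h : StronglyMeasurable fun p : ℝ × ℝ => p.2 * gk t p.2 p.1 :=
    (measurable_snd.mul ((gk_measurable t).comp measurable_swap)).stronglyMeasurable
  exact h.integral_prod_right'.measurable

lemma hh_measurable (μ : Measure ℝ) [SFinite μ] (t : ℝ) :
    Measurable (hh μ t) := by
  have h : StronglyMeasurable fun p : ℝ × ℝ => p.2 ^ 2 * gk t p.2 p.1 :=
    ((measurable_snd.pow_const 2).mul ((gk_measurable t).comp measurable_swap)).stronglyMeasurable
  exact h.integral_prod_right'.measurable

lemma hr_measurable (μ : Measure ℝ) [SFinite μ] (t : ℝ) :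
    Measurable (hr μ t) :=
  (hg_measurable μ t).div (heatDensity_measurable μ t)

lemma sq_hg_le (μ : Measure ℝ) [IsProbabilityMeasure μ]
    (hμ2 : Integrable (fun x => x ^ 2) μ) {t : ℝ} (ht : 0 < t) (y : ℝ) :
    hg μ t y ^ 2 ≤ hh μ t y * heatDensity μ t y := by
  set f := heatDensity μ t y with hf
  set g := hg μ t y with hgdef
  have hfpos : 0 < f := heatDensity_pos μ ht y
  have h0 : 0 ≤ ∫ x, (x - g / f) ^ 2 * gk t x y ∂μ :=
    integral_nonneg (fun x => mul_nonneg (sq_nonneg _) (gk_pos ht x y).le)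
  have hexp : ∫ x, (x - g / f) ^ 2 * gk t x y ∂μ
      = hh μ t y - 2 * (g / f) * g + (g / f) ^ 2 * f := by
    have hptw : ∀ x, (x - g / f) ^ 2 * gk t x y
        = x ^ 2 * gk t x y - 2 * (g / f) * (x * gk t x y) + (g / f) ^ 2 * gk t x y := by
      intro x; ring
    simp_rw [hptw]
    have hA : Integrable (fun x => x ^ 2 * gk t x y) μ := integrable_sq_mul_gk_x μ hμ2 ht y
    have hB : Integrable (fun x => 2 * (g / f) * (x * gk t x y)) μ :=
      (integrable_mul_gk_x μ hμ2 ht y).const_mul _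
    have hAB : Integrable (fun x => x ^ 2 * gk t x y - 2 * (g / f) * (x * gk t x y)) μ := hA.sub hB
    have hC : Integrable (fun x => (g / f) ^ 2 * gk t x y) μ := (integrable_gk_x μ ht y).const_mul _
    rw [integral_add hAB hC, integral_sub hA hB, integral_const_mul, integral_const_mul]
    rfl
  rw [hexp] at h0
  have he1 : 2 * (g / f) * g = 2 * (g ^ 2 / f) := by ring
  have he2 : (g / f) ^ 2 * f = g ^ 2 / f := by
    field_simp
  rw [he1, he2] at h0
  have : g ^ 2 / f ≤ hh μ t y := by linarith
  calc g ^ 2 = g ^ 2 / f * f := (div_mul_cancel₀ _ hfpos.ne').symm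
    _ ≤ hh μ t y * f := mul_le_mul_of_nonneg_right this hfpos.le
lemma gk_shift' {t : ℝ} (x w : ℝ) : gk t x (x + w) = gk t 0 w := by
  unfold gk; simp

lemma nnreal_mk_ne_zero {t : ℝ} (ht : 0 < t) : (⟨t, ht.le⟩ : NNReal) ≠ 0 := by
  intro h
  exact ht.ne' (congrArg (fun v : NNReal => (v : ℝ)) h)

lemma gaussianPDF_eq_gk {t : ℝ} (ht : 0 < t) (x y : ℝ) :
    gaussianPDF x ⟨t, ht.le⟩ y = ENNReal.ofReal (gk t x y) := by
  rw [gk_eq_gaussianPDFReal ht]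
  rfl

lemma conv_density (μ : Measure ℝ) [IsProbabilityMeasure μ] {t : ℝ} (ht : 0 < t) :
    (μ.prod (gaussianReal 0 ⟨t, ht.le⟩)).map (fun p : ℝ × ℝ => (p.1, p.1 + p.2)) =
      (μ.prod volume).withDensity (fun p => ENNReal.ofReal (gk t p.1 p.2)) := by
  have hT : Measurable (fun p : ℝ × ℝ => (p.1, p.1 + p.2)) :=
    measurable_fst.prodMk (measurable_fst.add measurable_snd)
  have hden : Measurable (fun p : ℝ × ℝ => ENNReal.ofReal (gk t p.1 p.2)) :=
    (gk_measurable t).ennreal_ofReal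
  haveI : IsProbabilityMeasure (gaussianReal 0 ⟨t, ht.le⟩) :=
    instIsProbabilityMeasureGaussianReal _ _
  ext s hs
  rw [Measure.map_apply hT hs, withDensity_apply _ hs, Measure.prod_apply (hT hs)]
  have hRHS : ∫⁻ p in s, ENNReal.ofReal (gk t p.1 p.2) ∂(μ.prod volume)
      = ∫⁻ x, ∫⁻ y, s.indicator (fun p => ENNReal.ofReal (gk t p.1 p.2)) (x, y) ∂volume ∂μ := by
    rw [← lintegral_indicator hs, lintegral_prod _ ((hden.indicator hs).aemeasurable)]
  rw [hRHS]
  apply lintegral_congr fun x => ?_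
  have hA : MeasurableSet {w : ℝ | (x, x + w) ∈ s} :=
    (measurable_const.prodMk (measurable_const.add measurable_id)) hs
  have hpre : Prod.mk x ⁻¹' ((fun p : ℝ × ℝ => (p.1, p.1 + p.2)) ⁻¹' s)
      = {w : ℝ | (x, x + w) ∈ s} := rfl
  rw [hpre, gaussianReal_apply 0 (nnreal_mk_ne_zero ht), ← lintegral_indicator hA]
  have hptw : ∀ w, Set.indicator {w : ℝ | (x, x + w) ∈ s} (gaussianPDF 0 ⟨t, ht.le⟩) w
      = s.indicator (fun p : ℝ × ℝ => ENNReal.ofReal (gk t p.1 p.2)) (x, x + w) := by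
    intro w
    by_cases hw : (x, x + w) ∈ s
    · rw [Set.indicator_of_mem hw, Set.indicator_of_mem (by exact hw)]
      rw [gaussianPDF_eq_gk ht, gk_shift']
    · rw [Set.indicator_of_notMem hw, Set.indicator_of_notMem (by exact hw)]
  have key : ∫⁻ w, s.indicator (fun p : ℝ × ℝ => ENNReal.ofReal (gk t p.1 p.2)) (x, x + w)
      = ∫⁻ y, s.indicator (fun p : ℝ × ℝ => ENNReal.ofReal (gk t p.1 p.2)) (x, y) :=
    lintegral_add_left_eq_self
      (fun y => s.indicator (fun p : ℝ × ℝ => ENNReal.ofReal (gk t p.1 p.2)) (x, y)) x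
  rw [lintegral_congr hptw, key]

lemma marginal_density (μ : Measure ℝ) [IsProbabilityMeasure μ] {t : ℝ} (ht : 0 < t) :
    ((μ.prod volume).withDensity (fun p => ENNReal.ofReal (gk t p.1 p.2))).map Prod.snd =
      volume.withDensity (fun y => ENNReal.ofReal (heatDensity μ t y)) := by
  have hden : Measurable (fun p : ℝ × ℝ => ENNReal.ofReal (gk t p.1 p.2)) :=
    (gk_measurable t).ennreal_ofReal
  ext s hs
  rw [Measure.map_apply measurable_snd hs, withDensity_apply _ (measurable_snd hs),
    withDensity_apply _ hs]
  have h1 : ∫⁻ p in Prod.snd ⁻¹' s, ENNReal.ofReal (gk t p.1 p.2) ∂(μ.prod volume)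
      = ∫⁻ y, ∫⁻ x, (Prod.snd ⁻¹' s).indicator
          (fun p : ℝ × ℝ => ENNReal.ofReal (gk t p.1 p.2)) (x, y) ∂μ ∂volume := by
    rw [← lintegral_indicator (measurable_snd hs),
      lintegral_prod_symm _ ((hden.indicator (measurable_snd hs)).aemeasurable)]
  rw [h1]
  have h2 : ∀ y, ∫⁻ x, (Prod.snd ⁻¹' s).indicator
      (fun p : ℝ × ℝ => ENNReal.ofReal (gk t p.1 p.2)) (x, y) ∂μ
      = s.indicator (fun y => ENNReal.ofReal (heatDensity μ t y)) y := by
    intro y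
    by_cases hy : y ∈ s
    · have : ∀ x, (Prod.snd ⁻¹' s).indicator
          (fun p : ℝ × ℝ => ENNReal.ofReal (gk t p.1 p.2)) (x, y)
          = ENNReal.ofReal (gk t x y) := fun x => Set.indicator_of_mem (by exact hy) _
      rw [lintegral_congr this, Set.indicator_of_mem hy]
      rw [← ofReal_integral_eq_lintegral_ofReal (integrable_gk_x μ ht y)
        (ae_of_all _ fun x => (gk_pos ht x y).le)]
      rfl
    · have : ∀ x, (Prod.snd ⁻¹' s).indicator
          (fun p : ℝ × ℝ => ENNReal.ofReal (gk t p.1 p.2)) (x, y) = 0 :=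
        fun x => Set.indicator_of_notMem (by exact hy) _
      rw [lintegral_congr this, Set.indicator_of_notMem hy, lintegral_zero]
  rw [lintegral_congr h2, lintegral_indicator hs]
section OmegaSide

variable {Ω : Type*} [MeasurableSpace Ω] (P : Measure Ω) [IsProbabilityMeasure P]
  (X Z : Ω → ℝ)

lemma law_joint (hX : Measurable X) (hZ : Measurable Z)
    (hindep : IndepFun X Z P) (hZlaw : P.map Z = gaussianReal 0 1) {t : ℝ} (ht : 0 < t) :
    P.map (fun ω => (X ω, X ω + Real.sqrt t * Z ω)) =
      ((P.map X).prod volume).withDensity (fun p => ENNReal.ofReal (gk t p.1 p.2)) := by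
  haveI : IsProbabilityMeasure (P.map X) := Measure.isProbabilityMeasure_map hX.aemeasurable
  have hW : Measurable fun ω => Real.sqrt t * Z ω := hZ.const_mul _
  have hT : Measurable (fun p : ℝ × ℝ => (p.1, p.1 + p.2)) :=
    measurable_fst.prodMk (measurable_fst.add measurable_snd)
  have hWlaw : P.map (fun ω => Real.sqrt t * Z ω) = gaussianReal 0 ⟨t, ht.le⟩ := by
    have h1 : P.map (fun ω => Real.sqrt t * Z ω)
        = (P.map Z).map (fun z => Real.sqrt t * z) := by
      rw [Measure.map_map (measurable_const_mul _) hZ]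
      rfl
    rw [h1, hZlaw]
    have h2 := gaussianReal_map_const_mul (μ := 0) (v := 1) (Real.sqrt t)
    have h3 : (fun z => Real.sqrt t * z) = (Real.sqrt t * ·) := rfl
    rw [h3, h2]
    congr 1
    · ring
    · ext
      simp [Real.sq_sqrt ht.le]
      rfl
  have hindep' : IndepFun X (fun ω => Real.sqrt t * Z ω) P :=
    hindep.comp measurable_id (measurable_const_mul _)
  have hprod : P.map (fun ω => (X ω, Real.sqrt t * Z ω))
      = (P.map X).prod (gaussianReal 0 ⟨t, ht.le⟩) := by
    rw [← hWlaw]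
    exact (indepFun_iff_map_prod_eq_prod_map_map hX.aemeasurable hW.aemeasurable).1 hindep'
  have hcomp : P.map (fun ω => (X ω, X ω + Real.sqrt t * Z ω)) =
      (P.map (fun ω => (X ω, Real.sqrt t * Z ω))).map (fun p : ℝ × ℝ => (p.1, p.1 + p.2)) := by
    rw [Measure.map_map hT (hX.prodMk hW)]
    rfl
  rw [hcomp, hprod, conv_density (P.map X) ht]

lemma law_Y (hX : Measurable X) (hZ : Measurable Z)
    (hindep : IndepFun X Z P) (hZlaw : P.map Z = gaussianReal 0 1) {t : ℝ} (ht : 0 < t) :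
    P.map (fun ω => X ω + Real.sqrt t * Z ω) =
      volume.withDensity (fun y => ENNReal.ofReal (heatDensity (P.map X) t y)) := by
  haveI : IsProbabilityMeasure (P.map X) := Measure.isProbabilityMeasure_map hX.aemeasurable
  have hW : Measurable fun ω => Real.sqrt t * Z ω := hZ.const_mul _
  have h1 : P.map (fun ω => X ω + Real.sqrt t * Z ω)
      = (P.map (fun ω => (X ω, X ω + Real.sqrt t * Z ω))).map Prod.snd := by
    rw [Measure.map_map measurable_snd
      (hX.prodMk (hX.add hW) : Measurable fun ω => (X ω, X ω + Real.sqrt t * Z ω))]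
    rfl
  rw [h1, law_joint P X Z hX hZ hindep hZlaw ht, marginal_density (P.map X) ht]

lemma integrable_joint_iff (hX : Measurable X) (hZ : Measurable Z)
    (hindep : IndepFun X Z P) (hZlaw : P.map Z = gaussianReal 0 1) {t : ℝ} (ht : 0 < t)
    {q : ℝ × ℝ → ℝ} (hq : Measurable q) :
    Integrable (fun ω => q (X ω, X ω + Real.sqrt t * Z ω)) P ↔
      Integrable (fun p => q p * gk t p.1 p.2) ((P.map X).prod volume) := by
  have hW : Measurable fun ω => Real.sqrt t * Z ω := hZ.const_mul _
  have hpair : Measurable (fun ω => (X ω, X ω + Real.sqrt t * Z ω)) :=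
    hX.prodMk (hX.add hW)
  have hden : Measurable (fun p : ℝ × ℝ => ENNReal.ofReal (gk t p.1 p.2)) :=
    (gk_measurable t).ennreal_ofReal
  have h1 := integrable_map_measure (μ := P)
    (f := fun ω => (X ω, X ω + Real.sqrt t * Z ω)) (g := q)
    (by rw [law_joint P X Z hX hZ hindep hZlaw ht]
        exact hq.aestronglyMeasurable) hpair.aemeasurable
  rw [law_joint P X Z hX hZ hindep hZlaw ht] at h1
  rw [integrable_withDensity_iff hden (ae_of_all _ fun p => ENNReal.ofReal_lt_top)] at h1
  have h2 : (fun p : ℝ × ℝ => q p * (ENNReal.ofReal (gk t p.1 p.2)).toReal)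
      = fun p => q p * gk t p.1 p.2 := by
    funext p
    rw [ENNReal.toReal_ofReal (gk_pos ht p.1 p.2).le]
  rw [h2] at h1
  exact h1.symm

lemma integral_joint (hX : Measurable X) (hZ : Measurable Z)
    (hindep : IndepFun X Z P) (hZlaw : P.map Z = gaussianReal 0 1) {t : ℝ} (ht : 0 < t)
    {q : ℝ × ℝ → ℝ} (hq : Measurable q) :
    ∫ ω, q (X ω, X ω + Real.sqrt t * Z ω) ∂P
      = ∫ p, q p * gk t p.1 p.2 ∂((P.map X).prod volume) := by
  have hW : Measurable fun ω => Real.sqrt t * Z ω := hZ.const_mul _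
  have hpair : Measurable (fun ω => (X ω, X ω + Real.sqrt t * Z ω)) :=
    hX.prodMk (hX.add hW)
  have h1 : ∫ ω, q (X ω, X ω + Real.sqrt t * Z ω) ∂P
      = ∫ p, q p ∂(P.map (fun ω => (X ω, X ω + Real.sqrt t * Z ω))) := by
    rw [integral_map hpair.aemeasurable
      (by rw [law_joint P X Z hX hZ hindep hZlaw ht]; exact hq.aestronglyMeasurable)]
  rw [h1, law_joint P X Z hX hZ hindep hZlaw ht]
  have h2 : (((P.map X).prod volume).withDensity fun p => ENNReal.ofReal (gk t p.1 p.2))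
      = ((P.map X).prod volume).withDensity
          fun p => ((Real.toNNReal (gk t p.1 p.2) : NNReal) : ENNReal) := rfl
  rw [h2, integral_withDensity_eq_integral_smul (gk_measurable t).real_toNNReal q]
  apply integral_congr_ae (ae_of_all _ fun p => ?_)
  rw [NNReal.smul_def, smul_eq_mul, Real.coe_toNNReal _ (gk_pos ht p.1 p.2).le, mul_comm]

lemma integrable_Y_iff (hX : Measurable X) (hZ : Measurable Z)
    (hindep : IndepFun X Z P) (hZlaw : P.map Z = gaussianReal 0 1) {t : ℝ} (ht : 0 < t)
    {φ : ℝ → ℝ} (hφ : Measurable φ) :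
    Integrable (fun ω => φ (X ω + Real.sqrt t * Z ω)) P ↔
      Integrable (fun y => φ y * heatDensity (P.map X) t y) volume := by
  haveI : IsProbabilityMeasure (P.map X) := Measure.isProbabilityMeasure_map hX.aemeasurable
  have hW : Measurable fun ω => Real.sqrt t * Z ω := hZ.const_mul _
  have hY : Measurable (fun ω => X ω + Real.sqrt t * Z ω) := hX.add hW
  have hden : Measurable (fun y => ENNReal.ofReal (heatDensity (P.map X) t y)) :=
    (heatDensity_measurable (P.map X) t).ennreal_ofReal
  have h1 := integrable_map_measure (μ := P)
    (f := fun ω => X ω + Real.sqrt t * Z ω) (g := φ)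
    (by rw [law_Y P X Z hX hZ hindep hZlaw ht]; exact hφ.aestronglyMeasurable) hY.aemeasurable
  rw [law_Y P X Z hX hZ hindep hZlaw ht] at h1
  rw [integrable_withDensity_iff hden (ae_of_all _ fun y => ENNReal.ofReal_lt_top)] at h1
  have h2 : (fun y => φ y * (ENNReal.ofReal (heatDensity (P.map X) t y)).toReal)
      = fun y => φ y * heatDensity (P.map X) t y := by
    funext y
    rw [ENNReal.toReal_ofReal (heatDensity_pos (P.map X) ht y).le]
  rw [h2] at h1
  exact h1.symm

lemma integral_Y (hX : Measurable X) (hZ : Measurable Z)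
    (hindep : IndepFun X Z P) (hZlaw : P.map Z = gaussianReal 0 1) {t : ℝ} (ht : 0 < t)
    {φ : ℝ → ℝ} (hφ : Measurable φ) :
    ∫ ω, φ (X ω + Real.sqrt t * Z ω) ∂P
      = ∫ y, φ y * heatDensity (P.map X) t y ∂volume := by
  haveI : IsProbabilityMeasure (P.map X) := Measure.isProbabilityMeasure_map hX.aemeasurable
  have hW : Measurable fun ω => Real.sqrt t * Z ω := hZ.const_mul _
  have hY : Measurable (fun ω => X ω + Real.sqrt t * Z ω) := hX.add hW
  have h1 : ∫ ω, φ (X ω + Real.sqrt t * Z ω) ∂P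
      = ∫ y, φ y ∂(P.map (fun ω => X ω + Real.sqrt t * Z ω)) := by
    rw [integral_map hY.aemeasurable
      (by rw [law_Y P X Z hX hZ hindep hZlaw ht]; exact hφ.aestronglyMeasurable)]
  rw [h1, law_Y P X Z hX hZ hindep hZlaw ht]
  have h2 : (volume.withDensity fun y => ENNReal.ofReal (heatDensity (P.map X) t y))
      = volume.withDensity fun y => ((Real.toNNReal (heatDensity (P.map X) t y) : NNReal) : ENNReal) := rfl
  rw [h2, integral_withDensity_eq_integral_smul
    (heatDensity_measurable (P.map X) t).real_toNNReal φ]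
  apply integral_congr_ae (ae_of_all _ fun y => ?_)
  rw [NNReal.smul_def, smul_eq_mul,
    Real.coe_toNNReal _ (heatDensity_pos (P.map X) ht y).le, mul_comm]

end OmegaSide
section ProdSide

variable (μ : Measure ℝ) [IsProbabilityMeasure μ]

lemma prod_meas_aux (t : ℝ) : Measurable (fun p : ℝ × ℝ => p.1 * gk t p.1 p.2) :=
  measurable_fst.mul (gk_measurable t)

lemma integrable_prod_abs_fst (hμ2 : Integrable (fun x => x ^ 2) μ) {t : ℝ} (ht : 0 < t) :
    Integrable (fun p : ℝ × ℝ => |p.1| * gk t p.1 p.2) (μ.prod volume) := by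
  have hmeas : Measurable (fun p : ℝ × ℝ => |p.1| * gk t p.1 p.2) :=
    measurable_fst.abs.mul (gk_measurable t)
  rw [integrable_prod_iff hmeas.aestronglyMeasurable]
  constructor
  · filter_upwards with x
    exact (integrable_gk_y ht x).const_mul _
  · apply Integrable.congr ((integrable_id' μ hμ2).abs)
    filter_upwards with x
    have : ∀ y, ‖|x| * gk t x y‖ = |x| * gk t x y := fun y =>
      abs_of_nonneg (mul_nonneg (abs_nonneg x) (gk_pos ht x y).le)
    rw [show (fun y => ‖|x| * gk t x y‖) = fun y => |x| * gk t x y from funext this]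
    rw [integral_const_mul, integral_gk_y ht x, mul_one]

lemma integrable_prod_sq_fst (hμ2 : Integrable (fun x => x ^ 2) μ) {t : ℝ} (ht : 0 < t) :
    Integrable (fun p : ℝ × ℝ => p.1 ^ 2 * gk t p.1 p.2) (μ.prod volume) := by
  have hmeas : Measurable (fun p : ℝ × ℝ => p.1 ^ 2 * gk t p.1 p.2) :=
    (measurable_fst.pow_const 2).mul (gk_measurable t)
  rw [integrable_prod_iff hmeas.aestronglyMeasurable]
  constructor
  · filter_upwards with x
    exact (integrable_gk_y ht x).const_mul _
  · apply Integrable.congr hμ2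
    filter_upwards with x
    have : ∀ y, ‖x ^ 2 * gk t x y‖ = x ^ 2 * gk t x y := fun y =>
      abs_of_nonneg (mul_nonneg (sq_nonneg x) (gk_pos ht x y).le)
    rw [show (fun y => ‖x ^ 2 * gk t x y‖) = fun y => x ^ 2 * gk t x y from funext this]
    rw [integral_const_mul, integral_gk_y ht x, mul_one]

lemma integrable_prod_mul (hμ2 : Integrable (fun x => x ^ 2) μ) {t : ℝ} (ht : 0 < t) :
    Integrable (fun p : ℝ × ℝ => |p.1| * |p.2| * gk t p.1 p.2) (μ.prod volume) := by
  have hmeas : Measurable (fun p : ℝ × ℝ => |p.1| * |p.2| * gk t p.1 p.2) :=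
    (measurable_fst.abs.mul measurable_snd.abs).mul (gk_measurable t)
  rw [integrable_prod_iff hmeas.aestronglyMeasurable]
  constructor
  · filter_upwards with x
    have : Integrable (fun y => |x| * (|y| * gk t x y)) volume :=
      (integrable_abs_mul_gk_y ht x).const_mul _
    apply this.congr (ae_of_all _ fun y => by ring)
  · set C := ∫ w, |w| * gk t 0 w with hC
    set N : ℝ → ℝ := fun x => ∫ y, |y| * gk t x y with hN
    have hNmeas : Measurable N := by
      have hsm : StronglyMeasurable fun p : ℝ × ℝ => |p.2| * gk t p.1 p.2 :=
        (measurable_snd.abs.mul (gk_measurable t)).stronglyMeasurable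
      exact hsm.integral_prod_right'.measurable
    have hNle : ∀ x, N x ≤ |x| + C := fun x => integral_abs_mul_gk_y_le ht x
    have hNnonneg : ∀ x, 0 ≤ N x := fun x =>
      integral_nonneg fun y => mul_nonneg (abs_nonneg y) (gk_pos ht x y).le
    have hbound : Integrable (fun x : ℝ => |x| * (|x| + C)) μ := by
      have h1 : Integrable (fun x : ℝ => |x| * |x| + |x| * C) μ := by
        apply Integrable.add
        · apply hμ2.congr (ae_of_all _ fun x => ?_)
          simp only
          rw [sq, ← abs_mul_abs_self x]
        · exact ((integrable_id' μ hμ2).abs).mul_const C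
      apply h1.congr (ae_of_all _ fun x => by ring)
    have hint : Integrable (fun x => |x| * N x) μ := by
      apply Integrable.mono' hbound (measurable_id.abs.mul hNmeas).aestronglyMeasurable
      filter_upwards with x
      simp only [id_eq, Real.norm_eq_abs, Pi.mul_apply]
      rw [abs_of_nonneg (mul_nonneg (abs_nonneg x) (hNnonneg x))]
      exact mul_le_mul_of_nonneg_left (hNle x) (abs_nonneg x)
    apply hint.congr
    filter_upwards with x
    rw [hN]
    simp only
    rw [← integral_const_mul]
    congr 1 with y
    rw [Real.norm_eq_abs,
      abs_of_nonneg (mul_nonneg (mul_nonneg (abs_nonneg x) (abs_nonneg y)) (gk_pos ht x y).le)]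
    ring

end ProdSide
section ProdSide2

variable (μ : Measure ℝ) [IsProbabilityMeasure μ]

lemma integrable_hg_aux (hμ2 : Integrable (fun x => x ^ 2) μ) {t : ℝ} (ht : 0 < t) :
    Integrable (fun p : ℝ × ℝ => p.1 * gk t p.1 p.2) (μ.prod volume) := by
  apply Integrable.mono' (integrable_prod_abs_fst μ hμ2 ht)
    (measurable_fst.mul (gk_measurable t)).aestronglyMeasurable
  filter_upwards with p
  simp only [Pi.mul_apply]
  rw [Real.norm_eq_abs, abs_mul, abs_of_pos (gk_pos ht p.1 p.2)]

lemma integrable_hg (hμ2 : Integrable (fun x => x ^ 2) μ) {t : ℝ} (ht : 0 < t) :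
    Integrable (hg μ t) volume := by
  have h := (integrable_hg_aux μ hμ2 ht).integral_prod_right
  exact h

lemma integrable_hh (hμ2 : Integrable (fun x => x ^ 2) μ) {t : ℝ} (ht : 0 < t) :
    Integrable (hh μ t) volume := by
  have h := (integrable_prod_sq_fst μ hμ2 ht).integral_prod_right
  exact h

lemma integrable_prod_mul_fst_snd (hμ2 : Integrable (fun x => x ^ 2) μ) {t : ℝ} (ht : 0 < t) :
    Integrable (fun p : ℝ × ℝ => p.1 * p.2 * gk t p.1 p.2) (μ.prod volume) := by
  apply Integrable.mono' (integrable_prod_mul μ hμ2 ht)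
    ((measurable_fst.mul measurable_snd).mul (gk_measurable t)).aestronglyMeasurable
  filter_upwards with p
  simp only [Pi.mul_apply]
  rw [Real.norm_eq_abs, abs_mul, abs_mul, abs_of_pos (gk_pos ht p.1 p.2)]

lemma inner_mul_hg (hμ2 : Integrable (fun x => x ^ 2) μ) {t : ℝ} (ht : 0 < t) (y : ℝ) :
    ∫ x, x * y * gk t x y ∂μ = y * hg μ t y := by
  rw [hg, ← integral_const_mul]
  exact integral_congr_ae (ae_of_all _ fun x => by ring)

lemma integrable_mul_hg (hμ2 : Integrable (fun x => x ^ 2) μ) {t : ℝ} (ht : 0 < t) :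
    Integrable (fun y => y * hg μ t y) volume := by
  have h := (integrable_prod_mul_fst_snd μ hμ2 ht).integral_prod_right
  apply h.congr
  filter_upwards with y
  exact inner_mul_hg μ hμ2 ht y

lemma integral_prod_mul_eq (hμ2 : Integrable (fun x => x ^ 2) μ) {t : ℝ} (ht : 0 < t) :
    ∫ p, p.1 * p.2 * gk t p.1 p.2 ∂(μ.prod volume) = ∫ y, y * hg μ t y := by
  rw [integral_prod_symm _ (integrable_prod_mul_fst_snd μ hμ2 ht)]
  exact integral_congr_ae (ae_of_all _ fun y => inner_mul_hg μ hμ2 ht y)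

lemma integral_prod_indicator (hμ2 : Integrable (fun x => x ^ 2) μ) {t : ℝ} (ht : 0 < t)
    {B : Set ℝ} (hB : MeasurableSet B) :
    ∫ p, p.1 * B.indicator 1 p.2 * gk t p.1 p.2 ∂(μ.prod volume) = ∫ y in B, hg μ t y := by
  have hqmeas : Measurable (fun p : ℝ × ℝ => p.1 * B.indicator 1 p.2 * gk t p.1 p.2) :=
    (measurable_fst.mul ((measurable_one.indicator hB).comp measurable_snd)).mul
      (gk_measurable t)
  have hf : Integrable (fun p : ℝ × ℝ => p.1 * B.indicator 1 p.2 * gk t p.1 p.2)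
      (μ.prod volume) := by
    apply Integrable.mono' (integrable_prod_abs_fst μ hμ2 ht) hqmeas.aestronglyMeasurable
    filter_upwards with p
    rw [Real.norm_eq_abs, abs_mul, abs_mul, abs_of_pos (gk_pos ht p.1 p.2)]
    by_cases hp : p.2 ∈ B
    · rw [Set.indicator_of_mem hp]
      simp
    · rw [Set.indicator_of_notMem hp]
      simp [abs_nonneg, mul_nonneg, (gk_pos ht p.1 p.2).le]
  rw [integral_prod_symm _ hf]
  have hptw : ∀ y, ∫ x, x * B.indicator 1 y * gk t x y ∂μ
      = B.indicator (fun y => hg μ t y) y := by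
    intro y
    by_cases hy : y ∈ B
    · have hx : ∀ x, x * B.indicator 1 y * gk t x y = x * gk t x y := by
        intro x
        rw [Set.indicator_of_mem hy]
        simp
      rw [integral_congr_ae (ae_of_all _ hx), Set.indicator_of_mem hy]
      rfl
    · have hx : ∀ x, x * B.indicator 1 y * gk t x y = 0 := by
        intro x
        rw [Set.indicator_of_notMem hy]
        simp
      rw [integral_congr_ae (ae_of_all _ hx), integral_zero, Set.indicator_of_notMem hy]
  rw [integral_congr_ae (ae_of_all _ hptw), integral_indicator hB]

lemma integrable_hr_sq_f (hμ2 : Integrable (fun x => x ^ 2) μ) {t : ℝ} (ht : 0 < t) :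
    Integrable (fun y => hr μ t y ^ 2 * heatDensity μ t y) volume := by
  apply Integrable.mono' (integrable_hh μ hμ2 ht)
    (((hr_measurable μ t).pow_const 2).mul (heatDensity_measurable μ t)).aestronglyMeasurable
  filter_upwards with y
  have hfpos := heatDensity_pos μ ht y
  have hkey := sq_hg_le μ hμ2 ht y
  simp only [Pi.mul_apply]
  rw [Real.norm_eq_abs, abs_of_nonneg (mul_nonneg (sq_nonneg _) hfpos.le)]
  have heq : hr μ t y ^ 2 * heatDensity μ t y = hg μ t y ^ 2 / heatDensity μ t y := by
    rw [hr]
    field_simp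
  rw [heq, div_le_iff₀ hfpos]
  exact hkey

lemma integrable_hr_mul_f {t : ℝ} (ht : 0 < t) (hμ2 : Integrable (fun x => x ^ 2) μ) :
    Integrable (fun y => hr μ t y * heatDensity μ t y) volume := by
  apply (integrable_hg μ hμ2 ht).congr (ae_of_all _ fun y => ?_)
  rw [hr, div_mul_cancel₀ _ (heatDensity_pos μ ht y).ne']

end ProdSide2
section Main

variable {Ω : Type*} [MeasurableSpace Ω] (P : Measure Ω) [IsProbabilityMeasure P]
  (X Z : Ω → ℝ)

lemma integrable_X_of_sq (hX : Measurable X) (hX2 : Integrable (fun ω => X ω ^ 2) P) :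
    Integrable X P := by
  apply Integrable.mono' (g := fun ω => 1 + X ω ^ 2) ((integrable_const 1).add hX2)
    hX.aestronglyMeasurable
  filter_upwards with ω
  rw [Real.norm_eq_abs]
  nlinarith [sq_nonneg (|X ω| - 1), sq_abs (X ω)]

lemma condexp_eq_hr (hX : Measurable X) (hZ : Measurable Z)
    (hindep : IndepFun X Z P) (hZlaw : P.map Z = gaussianReal 0 1)
    (hX2 : Integrable (fun ω => X ω ^ 2) P) {t : ℝ} (ht : 0 < t) :
    P[X | MeasurableSpace.comap (fun ω => X ω + Real.sqrt t * Z ω) inferInstance]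
      =ᵐ[P] fun ω => hr (P.map X) t (X ω + Real.sqrt t * Z ω) := by
  haveI : IsProbabilityMeasure (P.map X) := Measure.isProbabilityMeasure_map hX.aemeasurable
  have hμ2 : Integrable (fun x => x ^ 2) (P.map X) :=
    (integrable_map_measure (measurable_id.pow_const 2).aestronglyMeasurable
      hX.aemeasurable).2 hX2
  have hY : Measurable (fun ω => X ω + Real.sqrt t * Z ω) := hX.add (hZ.const_mul _)
  have hm : MeasurableSpace.comap (fun ω => X ω + Real.sqrt t * Z ω) inferInstance
      ≤ (inferInstance : MeasurableSpace Ω) := hY.comap_le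
  have hrY_int : Integrable (fun ω => hr (P.map X) t (X ω + Real.sqrt t * Z ω)) P :=
    (integrable_Y_iff P X Z hX hZ hindep hZlaw ht (hr_measurable (P.map X) t)).2
      (integrable_hr_mul_f (P.map X) ht hμ2)
  symm
  apply ae_eq_condExp_of_forall_setIntegral_eq hm (integrable_X_of_sq P X hX hX2)
  · intro s _ _
    exact hrY_int.integrableOn
  · rintro s ⟨B, hB, rfl⟩ _
    have hYB : MeasurableSet ((fun ω => X ω + Real.sqrt t * Z ω) ⁻¹' B) := hY hB
    have hLHS : ∫ ω in (fun ω => X ω + Real.sqrt t * Z ω) ⁻¹' B,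
        hr (P.map X) t (X ω + Real.sqrt t * Z ω) ∂P = ∫ y in B, hg (P.map X) t y := by
      rw [← integral_indicator hYB]
      have hind : ∀ ω, ((fun ω => X ω + Real.sqrt t * Z ω) ⁻¹' B).indicator
          (fun ω => hr (P.map X) t (X ω + Real.sqrt t * Z ω)) ω
          = hr (P.map X) t (X ω + Real.sqrt t * Z ω)
            * B.indicator 1 (X ω + Real.sqrt t * Z ω) := by
        intro ω
        by_cases hω : (X ω + Real.sqrt t * Z ω) ∈ B
        · rw [Set.indicator_of_mem (by exact hω), Set.indicator_of_mem hω]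
          simp
        · rw [Set.indicator_of_notMem (by exact hω), Set.indicator_of_notMem hω]
          simp
      rw [integral_congr_ae (ae_of_all _ hind),
        integral_Y P X Z hX hZ hindep hZlaw ht (φ := fun y => hr (P.map X) t y * B.indicator 1 y)
          ((hr_measurable (P.map X) t).mul (measurable_one.indicator hB)),
        ← integral_indicator hB]
      apply integral_congr_ae (ae_of_all _ fun y => ?_)
      by_cases hy : y ∈ B
      · rw [Set.indicator_of_mem hy, Set.indicator_of_mem hy]
        simp only [Pi.one_apply, mul_one]
        rw [hr, div_mul_cancel₀ _ (heatDensity_pos (P.map X) ht y).ne']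
      · rw [Set.indicator_of_notMem hy, Set.indicator_of_notMem hy]
        simp
    have hRHS : ∫ ω in (fun ω => X ω + Real.sqrt t * Z ω) ⁻¹' B, X ω ∂P
        = ∫ y in B, hg (P.map X) t y := by
      rw [← integral_indicator hYB]
      have hind : ∀ ω, ((fun ω => X ω + Real.sqrt t * Z ω) ⁻¹' B).indicator X ω
          = X ω * B.indicator 1 (X ω + Real.sqrt t * Z ω) := by
        intro ω
        by_cases hω : (X ω + Real.sqrt t * Z ω) ∈ B
        · rw [Set.indicator_of_mem (by exact hω), Set.indicator_of_mem hω]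
          simp
        · rw [Set.indicator_of_notMem (by exact hω), Set.indicator_of_notMem hω]
          simp
      rw [integral_congr_ae (ae_of_all _ hind),
        integral_joint P X Z hX hZ hindep hZlaw ht
          (q := fun p => p.1 * B.indicator 1 p.2)
          (measurable_fst.mul ((measurable_one.indicator hB).comp measurable_snd))]
      exact integral_prod_indicator (P.map X) hμ2 ht hB
    rw [hLHS, hRHS]
  · have hYm : @Measurable Ω ℝ
        (MeasurableSpace.comap (fun ω => X ω + Real.sqrt t * Z ω) inferInstance) _
        (fun ω => X ω + Real.sqrt t * Z ω) := measurable_iff_comap_le.2 le_rfl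
    exact StronglyMeasurable.aestronglyMeasurable
      (Measurable.stronglyMeasurable ((hr_measurable (P.map X) t).comp hYm))

end Main
lemma integrable_sq_gaussian : Integrable (fun z : ℝ => z ^ 2) (gaussianReal 0 1) := by
  rw [gaussianReal_of_var_ne_zero _ one_ne_zero]
  rw [integrable_withDensity_iff (measurable_gaussianPDF _ _)
    (ae_of_all _ fun z => ENNReal.ofReal_lt_top)]
  apply (integrable_sq_mul_gk_y one_pos 0).congr (ae_of_all _ fun z => ?_)
  show z ^ 2 * gk 1 0 z = z ^ 2 * (gaussianPDF 0 1 z).toReal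
  rw [gk_eq_gaussianPDFReal one_pos 0 z, show (gaussianPDF 0 1 z).toReal
      = gaussianPDFReal 0 1 z from ENNReal.toReal_ofReal (gaussianPDFReal_nonneg 0 1 z)]
  rfl

/-- Fisher information of `Y = X + √t·Z` in estimation-theoretic form: if `X` has finite
variance, `t > 0`, and `Z ~ N(0,1)` is independent of `X`, then
`J(Y) = E[(f_Y'(Y)/f_Y(Y))²] = (E[(E[X|Y])²] + E[Y²] − 2E[X·Y]) / t²`. -/
theorem fisher_info_of_gaussian_smoothing {Ω : Type*} [MeasurableSpace Ω] (P : Measure Ω)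
    [IsProbabilityMeasure P] (X Z : Ω → ℝ) (hX : Measurable X) (hZ : Measurable Z)
    (hindep : IndepFun X Z P) (hZlaw : P.map Z = gaussianReal 0 1)
    (hX2 : Integrable (fun ω => (X ω) ^ 2) P)
    (t : ℝ) (ht : 0 < t) :
    (∫ ω, (deriv (heatDensity (P.map X) t) (X ω + Real.sqrt t * Z ω) /
        heatDensity (P.map X) t (X ω + Real.sqrt t * Z ω)) ^ 2 ∂P) =
      ((∫ ω, ((P[X | MeasurableSpace.comap (fun ω => X ω + Real.sqrt t * Z ω)
            inferInstance]) ω) ^ 2 ∂P) +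
        (∫ ω, (X ω + Real.sqrt t * Z ω) ^ 2 ∂P) -
        2 * ∫ ω, X ω * (X ω + Real.sqrt t * Z ω) ∂P) / t ^ 2 := by
  haveI : IsProbabilityMeasure (P.map X) := Measure.isProbabilityMeasure_map hX.aemeasurable
  have hμ2 : Integrable (fun x => x ^ 2) (P.map X) :=
    (integrable_map_measure (measurable_id.pow_const 2).aestronglyMeasurable
      hX.aemeasurable).2 hX2
  have hY : Measurable (fun ω => X ω + Real.sqrt t * Z ω) := hX.add (hZ.const_mul _)
  -- score identity
  have hscore : ∀ y, deriv (heatDensity (P.map X) t) y / heatDensity (P.map X) t y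
      = (hr (P.map X) t y - y) / t := by
    intro y
    rw [(hasDerivAt_heatDensity (P.map X) hμ2 ht y).deriv, hr]
    have hf := (heatDensity_pos (P.map X) ht y).ne'
    field_simp
  have hLHS : (∫ ω, (deriv (heatDensity (P.map X) t) (X ω + Real.sqrt t * Z ω) /
        heatDensity (P.map X) t (X ω + Real.sqrt t * Z ω)) ^ 2 ∂P)
      = ∫ ω, ((hr (P.map X) t (X ω + Real.sqrt t * Z ω) - (X ω + Real.sqrt t * Z ω)) / t) ^ 2
          ∂P :=
    integral_congr_ae (ae_of_all _ fun ω =>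
      congrArg (fun s : ℝ => s ^ 2) (hscore (X ω + Real.sqrt t * Z ω)))
  -- integrability on Ω
  have intZ2 : Integrable (fun ω => Z ω ^ 2) P := by
    have h := (integrable_map_measure (μ := P) (f := Z) (g := fun z : ℝ => z ^ 2)
      (by rw [hZlaw]; exact (measurable_id.pow_const 2).aestronglyMeasurable) hZ.aemeasurable)
    rw [hZlaw] at h
    exact h.1 integrable_sq_gaussian
  have intX : Integrable X P := integrable_X_of_sq P X hX hX2
  have intZ : Integrable Z P := integrable_X_of_sq P Z hZ intZ2
  have intXZ : Integrable (fun ω => X ω * Z ω) P := hindep.integrable_mul intX intZ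
  have hsq : Real.sqrt t ^ 2 = t := Real.sq_sqrt ht.le
  have intY2 : Integrable (fun ω => (X ω + Real.sqrt t * Z ω) ^ 2) P := by
    apply ((hX2.add (intXZ.const_mul (2 * Real.sqrt t))).add (intZ2.const_mul t)).congr
      (ae_of_all _ fun ω => ?_)
    simp only [Pi.add_apply]
    linear_combination (-(Z ω ^ 2)) * hsq
  have intXY : Integrable (fun ω => X ω * (X ω + Real.sqrt t * Z ω)) P := by
    apply (hX2.add (intXZ.const_mul (Real.sqrt t))).congr (ae_of_all _ fun ω => ?_)
    simp only [Pi.add_apply]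
    ring
  have intR2 : Integrable (fun ω => hr (P.map X) t (X ω + Real.sqrt t * Z ω) ^ 2) P :=
    (integrable_Y_iff P X Z hX hZ hindep hZlaw ht (φ := fun y => hr (P.map X) t y ^ 2)
      ((hr_measurable (P.map X) t).pow_const 2)).2 (integrable_hr_sq_f (P.map X) hμ2 ht)
  have intRY : Integrable (fun ω => hr (P.map X) t (X ω + Real.sqrt t * Z ω)
      * (X ω + Real.sqrt t * Z ω)) P := by
    have hbound : Integrable (fun ω => (hr (P.map X) t (X ω + Real.sqrt t * Z ω) ^ 2
        + (X ω + Real.sqrt t * Z ω) ^ 2) / 2) P := by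
      apply ((intR2.add intY2).div_const 2).congr (ae_of_all _ fun ω => ?_)
      simp [Pi.add_apply]
    apply Integrable.mono' hbound
      (((hr_measurable (P.map X) t).comp hY).mul hY).aestronglyMeasurable
    filter_upwards with ω
    rw [Real.norm_eq_abs]
    have h1 : ∀ a b : ℝ, |a * b| ≤ (a ^ 2 + b ^ 2) / 2 := by
      intro a b
      rw [abs_mul]
      nlinarith [sq_nonneg (|a| - |b|), sq_abs a, sq_abs b, abs_nonneg a, abs_nonneg b]
    exact h1 _ _
  -- expansion
  have hexp : ∫ ω, ((hr (P.map X) t (X ω + Real.sqrt t * Z ω) - (X ω + Real.sqrt t * Z ω)) / t)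
        ^ 2 ∂P
      = ((∫ ω, hr (P.map X) t (X ω + Real.sqrt t * Z ω) ^ 2 ∂P)
          - 2 * (∫ ω, hr (P.map X) t (X ω + Real.sqrt t * Z ω) * (X ω + Real.sqrt t * Z ω) ∂P)
          + ∫ ω, (X ω + Real.sqrt t * Z ω) ^ 2 ∂P) / t ^ 2 := by
    have hptw : ∀ ω, ((hr (P.map X) t (X ω + Real.sqrt t * Z ω) - (X ω + Real.sqrt t * Z ω)) / t)
          ^ 2
        = (hr (P.map X) t (X ω + Real.sqrt t * Z ω) ^ 2
            - 2 * (hr (P.map X) t (X ω + Real.sqrt t * Z ω) * (X ω + Real.sqrt t * Z ω))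
            + (X ω + Real.sqrt t * Z ω) ^ 2) / t ^ 2 := by
      intro ω
      field_simp
      ring
    rw [integral_congr_ae (ae_of_all _ hptw), integral_div]
    congr 1
    have hB : Integrable (fun ω => 2 * (hr (P.map X) t (X ω + Real.sqrt t * Z ω)
        * (X ω + Real.sqrt t * Z ω))) P := intRY.const_mul 2
    have hA : Integrable (fun ω => hr (P.map X) t (X ω + Real.sqrt t * Z ω) ^ 2
        - 2 * (hr (P.map X) t (X ω + Real.sqrt t * Z ω) * (X ω + Real.sqrt t * Z ω))) P :=
      intR2.sub hB
    rw [integral_add hA intY2, integral_sub intR2 hB, integral_const_mul]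
  -- S3 : E[r(Y) Y] = E[X Y]
  have hS3 : ∫ ω, hr (P.map X) t (X ω + Real.sqrt t * Z ω) * (X ω + Real.sqrt t * Z ω) ∂P
      = ∫ ω, X ω * (X ω + Real.sqrt t * Z ω) ∂P := by
    have h1 : ∫ ω, hr (P.map X) t (X ω + Real.sqrt t * Z ω) * (X ω + Real.sqrt t * Z ω) ∂P
        = ∫ y, y * hg (P.map X) t y := by
      rw [integral_Y P X Z hX hZ hindep hZlaw ht (φ := fun y => hr (P.map X) t y * y)
        ((hr_measurable (P.map X) t).mul measurable_id)]
      apply integral_congr_ae (ae_of_all _ fun y => ?_)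
      rw [hr]
      have hf := (heatDensity_pos (P.map X) ht y).ne'
      field_simp
    have h2 : ∫ ω, X ω * (X ω + Real.sqrt t * Z ω) ∂P = ∫ y, y * hg (P.map X) t y := by
      rw [integral_joint P X Z hX hZ hindep hZlaw ht (q := fun p => p.1 * p.2)
        (measurable_fst.mul measurable_snd)]
      exact integral_prod_mul_eq (P.map X) hμ2 ht
    rw [h1, h2]
  -- S2 : E[condexp²] = E[r(Y)²]
  have hce := condexp_eq_hr P X Z hX hZ hindep hZlaw hX2 ht
  have hS2 : ∫ ω, ((P[X | MeasurableSpace.comap (fun ω => X ω + Real.sqrt t * Z ω)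
        inferInstance]) ω) ^ 2 ∂P
      = ∫ ω, hr (P.map X) t (X ω + Real.sqrt t * Z ω) ^ 2 ∂P := by
    apply integral_congr_ae
    filter_upwards [hce] with ω hω
    rw [hω]
  rw [hLHS, hexp, hS2, hS3]
  ring
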